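/- Suppose f(x) = a_0x + a_1x^q + ... + a_{n-3}x^{q^{n-3}} - x^{q^{n-2}} over F_{q^n} has kernel of F_q-dimension n-2. Then for every integer t ≥ 2 with gcd(t-1,n)=1, the coefficients a_{t-2} and a_{n-t} are nonzero and, setting s = n-t+1, the relation a_{n-2t+1}·a_{t-2}^{q^{2s}+q^s} = -a_{n-t}^{q^s+1}·a_{2t-3}^{q^{2s}} holds, where indices n-2t+1 and 2t-3 are taken modulo n. -/

import Mathlib

open Polynomial

lemma powq_reduce {L : Type*} [Field L] [Fintype L] {q n : ℕ}
    (hL : Fintype.card L = q ^ n) (x : L) (c : ℕ) :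
    x ^ q ^ c = x ^ q ^ (c % n) := by
  have key : ∀ y : L, y ^ q ^ n = y := by
    intro y
    rw [← hL, FiniteField.pow_card]
  conv_lhs => rw [← Nat.div_add_mod c n]
  generalize c / n = d
  induction d with
  | zero => simp
  | succ d ih =>
      have h2 : n * (d+1) + c % n = (n * d + c % n) + n := by ring
      rw [h2, pow_add, pow_mul', key, ih]

lemma qpoly_zero {L : Type*} [Field L] [Fintype L] {q n : ℕ} (hq : 2 ≤ q) [NeZero n]
    (hL : Fintype.card L = q ^ n) (c : ZMod n → L)
    (h : ∀ x : L, ∑ m : ZMod n, c m * x ^ q ^ m.val = 0) : c = 0 := by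
  have hn : 0 < n := Nat.pos_of_ne_zero (NeZero.ne n)
  set g : L[X] := ∑ m : ZMod n, C (c m) * X ^ q ^ m.val with hg
  have hginj : Function.Injective (fun m : ZMod n => q ^ m.val) := by
    intro m m' hmm
    have := Nat.pow_right_injective hq hmm
    exact ZMod.val_injective n this
  have hcoeff : ∀ m : ZMod n, g.coeff (q ^ m.val) = c m := by
    intro m
    rw [hg, Polynomial.finset_sum_coeff]
    rw [Finset.sum_eq_single m]
    · simp
    · intro b _ hbm
      rw [Polynomial.coeff_C_mul, Polynomial.coeff_X_pow,
        if_neg (fun hc => hbm (hginj hc.symm))]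
      ring
    · simp
  have hdeg : g.natDegree < Fintype.card L := by
    calc g.natDegree ≤ q ^ (n - 1) := by
          apply Polynomial.natDegree_sum_le_of_forall_le
          intro m _
          apply le_trans (Polynomial.natDegree_C_mul_le _ _)
          rw [Polynomial.natDegree_X_pow]
          exact Nat.pow_le_pow_right (by omega) (by
            have := ZMod.val_lt m
            omega)
      _ < q ^ n := Nat.pow_lt_pow_right hq (by omega)
      _ = Fintype.card L := hL.symm
  have hg0 : g = 0 := by
    apply Polynomial.eq_zero_of_natDegree_lt_card_of_eval_eq_zero g
      (f := fun x : L => x) Function.injective_id ?_ hdeg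
    intro x
    rw [hg]
    simp only [Polynomial.eval_finset_sum, Polynomial.eval_mul, Polynomial.eval_C,
      Polynomial.eval_pow, Polynomial.eval_X]
    exact h x
  funext m
  have := hcoeff m
  rw [hg0] at this
  simpa using this.symm

lemma fixed_card {L : Type*} [Field L] [Fintype L] {q n : ℕ} (hq2 : 2 ≤ q) (hn : 0 < n)
    (hL : Fintype.card L = q ^ n) : Nat.card {x : L | x ^ q = x} = q := by
  classical
  have hcard2 : 1 < Fintype.card L := by
    rw [hL]; calc 1 < q := hq2
                 _ ≤ q ^ n := Nat.le_self_pow hn.ne' q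
  set g : L[X] := X ^ q - X with hg
  set big : L[X] := X ^ (Fintype.card L) - X with hbig
  have hgne : g ≠ 0 := FiniteField.X_pow_card_sub_X_ne_zero L hq2
  have hbigne : big ≠ 0 := FiniteField.X_pow_card_sub_X_ne_zero L hcard2
  have hdvd : g ∣ big := by
    have h1 : (q - 1) ∣ (q ^ n - 1) := by
      simpa using Nat.sub_dvd_pow_sub_pow q 1 n
    obtain ⟨m, hm⟩ := h1
    have hgX : g = X * (X ^ (q - 1) - 1) := by
      rw [hg, mul_sub, mul_one, ← pow_succ']
      congr 2
      omega
    have hbigX : big = X * (X ^ (Fintype.card L - 1) - 1) := by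
      rw [hbig, mul_sub, mul_one, ← pow_succ']
      congr 2
      omega
    rw [hgX, hbigX]
    apply mul_dvd_mul_left
    have : (X : L[X]) ^ (Fintype.card L - 1) - 1 = (X ^ (q-1)) ^ m - 1 ^ m := by
      rw [one_pow, ← pow_mul, ← hm, hL]
    rw [this]
    exact sub_dvd_pow_sub_pow _ _ m
  have hroots_le : g.roots ≤ big.roots := Polynomial.roots.le_of_dvd hbigne hdvd
  have hnodup : g.roots.Nodup := by
    have : big.roots.Nodup := by
      rw [hbig, FiniteField.roots_X_pow_card_sub_X]
      exact Finset.univ.nodup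
    exact Multiset.nodup_of_le hroots_le this
  have hbigsplit : big.Splits := by
    rw [Polynomial.splits_iff_card_roots, hbig, FiniteField.roots_X_pow_card_sub_X,
      FiniteField.X_pow_card_sub_X_natDegree_eq L hcard2]
    simp
  have hgsplit : g.Splits := hbigsplit.of_dvd hbigne hdvd
  have hcardroots : Multiset.card g.roots = q := by
    rw [← FiniteField.X_pow_card_sub_X_natDegree_eq L (p := q) hq2]
    exact Polynomial.splits_iff_card_roots.mp hgsplit
  have hset : {x : L | x ^ q = x} = (g.roots.toFinset : Set L) := by
    ext x
    simp only [Set.mem_setOf_eq, Finset.coe_sort_coe, Multiset.mem_toFinset, Finset.mem_coe,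
      Polynomial.mem_roots hgne, Polynomial.IsRoot.def, hg]
    rw [Polynomial.mem_roots (hg ▸ hgne), Polynomial.IsRoot.def, Polynomial.eval_sub, Polynomial.eval_pow, Polynomial.eval_X, sub_eq_zero]
  rw [hset, Nat.card_coe_set_eq, Set.ncard_coe_finset, Multiset.toFinset_card_of_nodup hnodup,
    hcardroots]

set_option maxHeartbeats 1000000 in
set_option synthInstance.maxHeartbeats 400000 in
theorem stmt9 (q n : ℕ) (hq : IsPrimePow q) (hn : 3 ≤ n)
    (L : Type*) [Field L] [Fintype L] (hL : Fintype.card L = q ^ n)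
    (a : ZMod n → L)
    (hlead : a ((n : ZMod n) - 2) = -1) (htop : a ((n : ZMod n) - 1) = 0)
    (hker : Set.ncard {x : L | ∑ i ∈ Finset.range (n - 1), a (i : ZMod n) * x ^ q ^ i = 0}
      = q ^ (n - 2)) :
    ∀ t : ℕ, 2 ≤ t → t ≤ n → Nat.gcd (t - 1) n = 1 →
      a ((t : ZMod n) - 2) ≠ 0 ∧ a ((n : ZMod n) - (t : ZMod n)) ≠ 0 ∧
      a ((n : ZMod n) - 2 * (t : ZMod n) + 1) *
          a ((t : ZMod n) - 2) ^ (q ^ (2 * (n - t + 1)) + q ^ (n - t + 1))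
        = -(a ((n : ZMod n) - (t : ZMod n)) ^ (q ^ (n - t + 1) + 1) *
            a (2 * (t : ZMod n) - 3) ^ q ^ (2 * (n - t + 1))) := by
  classical
  intro t ht2 htn hgcd
  have hq2 : 2 ≤ q := hq.two_le
  have hn0 : 0 < n := by omega
  haveI : NeZero n := ⟨by omega⟩
  -- characteristic
  obtain ⟨p, e, hp, he0, hpe⟩ := hq
  have hpp : p.Prime := hp.nat_prime
  haveI hcharL : CharP L p := by
    have hrP : (ringChar L).Prime := CharP.char_is_prime L (ringChar L)
    obtain ⟨m, -, hm2⟩ := FiniteField.card L (ringChar L)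
    have hdvd : ringChar L ∣ p ^ (e * n) := by
      rw [pow_mul, hpe, ← hL, hm2]
      exact dvd_pow_self _ (by positivity)
    have : ringChar L = p := by
      have := hrP.dvd_of_dvd_pow hdvd
      exact (Nat.prime_dvd_prime_iff_eq hrP hpp).mp this
    rw [← this]
    exact ringChar.charP L
  haveI : ExpChar L p := ExpChar.prime hpp
  -- Frobenius helpers
  have powq : ∀ (x : L) (c : ℕ), x ^ q ^ c = x ^ q ^ (c % n) := fun x c => powq_reduce hL x c
  have hqpow : ∀ c : ℕ, q ^ c = p ^ (e * c) := by
    intro c; rw [pow_mul, hpe]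
  have frob_add : ∀ (c : ℕ) (x y : L), (x + y) ^ q ^ c = x ^ q ^ c + y ^ q ^ c := by
    intro c x y; rw [hqpow c]; exact add_pow_expChar_pow x y p (e*c)
  have frob_sum : ∀ (c : ℕ) (g : ZMod n → L),
      (∑ m : ZMod n, g m) ^ q ^ c = ∑ m : ZMod n, g m ^ q ^ c := by
    intro c g
    rw [hqpow c]
    simp only [← iterateFrobenius_def (R := L) (p := p)]
    exact map_sum (iterateFrobenius L p (e * c)) g Finset.univ
  -- the subfield of q-th-power-fixed points
  have hq0' : q ≠ 0 := by omega
  let k : Subfield L :=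
    { carrier := {x : L | x ^ q = x}
      mul_mem' := by intro x y hx hy; simp only [Set.mem_setOf_eq] at *; rw [mul_pow, hx, hy]
      one_mem' := by simp
      add_mem' := by
        intro x y hx hy; simp only [Set.mem_setOf_eq] at *
        calc (x + y) ^ q = x ^ q + y ^ q := by
              have := frob_add 1 x y; rwa [pow_one] at this
          _ = x + y := by rw [hx, hy]
      zero_mem' := by simp only [Set.mem_setOf_eq]; exact zero_pow hq0'
      neg_mem' := by
        intro x hx; simp only [Set.mem_setOf_eq] at *
        have hneg1 : (-1 : L) ^ q = -1 := by
          have := neg_one_pow_expChar_pow L p e; rwa [hpe] at this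
        calc (-x) ^ q = (-1 * x) ^ q := by ring_nf
          _ = (-1) ^ q * x ^ q := mul_pow _ _ _
          _ = -x := by rw [hneg1, hx]; ring
      inv_mem' := by intro x hx; simp only [Set.mem_setOf_eq] at *; rw [inv_pow, hx] }
  have hmemk : ∀ x : L, x ∈ k ↔ x ^ q = x := fun x => Iff.rfl
  -- fixed elements stay fixed under all q-power maps
  have hfix : ∀ (r : L), r ^ q = r → ∀ c : ℕ, r ^ q ^ c = r := by
    intro r hr c
    induction c with
    | zero => simp
    | succ c ih => rw [pow_succ, pow_mul, ih, hr]
  -- card k = q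
  haveI : Fintype k := Fintype.ofFinite k
  have hkcard : Fintype.card k = q := by
    rw [← Nat.card_eq_fintype_card]
    exact fixed_card hq2 hn0 hL
  -- finrank of L over k
  have hrankL : Module.finrank k L = n := by
    have h1 : Fintype.card L = Fintype.card k ^ Module.finrank k L := Module.card_eq_pow_finrank
    rw [hL, hkcard] at h1
    exact (Nat.pow_right_injective hq2 h1.symm)
  -- the q-polynomial map
  set F : L → L := fun x => ∑ m : ZMod n, a m * x ^ q ^ m.val with hF
  have hsmulk : ∀ (r : k) (x : L), r • x = (r : L) * x := fun r x => rfl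
  have hFadd : ∀ x y, F (x + y) = F x + F y := by
    intro x y
    simp only [hF]
    rw [← Finset.sum_add_distrib]
    refine Finset.sum_congr rfl fun m _ => ?_
    rw [frob_add, mul_add]
  have hFsmul : ∀ (r : k) (x : L), F ((r : L) * x) = (r : L) * F x := by
    intro r x
    simp only [hF, Finset.mul_sum]
    refine Finset.sum_congr rfl fun m _ => ?_
    rw [mul_pow, hfix (r : L) r.2 m.val]
    ring
  let φ : L →ₗ[k] L :=
    { toFun := F
      map_add' := hFadd
      map_smul' := fun r x => hFsmul r x }
  have hφ : ∀ x : L, φ x = F x := fun x => rfl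
  -- kernel of φ is the given root set
  have hFrange : ∀ x : L, F x = ∑ i ∈ Finset.range (n - 1), a (i : ℕ) * x ^ q ^ i := by
    intro x
    have h1 : F x = ∑ i ∈ Finset.range n, a (i : ℕ) * x ^ q ^ i := by
      rw [hF]
      refine Finset.sum_nbij' (fun m : ZMod n => (m.val : ℕ)) (fun i : ℕ => (i : ZMod n))
        ?_ ?_ ?_ ?_ ?_
      · exact fun m _ => Finset.mem_range.mpr (ZMod.val_lt m)
      · exact fun i _ => Finset.mem_univ _
      · exact fun m _ => ZMod.natCast_rightInverse m
      · intro i hi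
        show ((i : ZMod n)).val = i
        rw [ZMod.val_natCast, Nat.mod_eq_of_lt (Finset.mem_range.mp hi)]
      · intro m _
        show a m * x ^ q ^ m.val = a ((m.val : ℕ) : ZMod n) * x ^ q ^ (m.val)
        rw [ZMod.natCast_rightInverse m]
    have h3 : ((n - 1 : ℕ) : ZMod n) = (n : ZMod n) - 1 := by
      push_cast [Nat.cast_sub (by omega : 1 ≤ n)]
      ring
    have h4 : Finset.range ((n-1)+1) = Finset.range n := by
      congr 1
      omega
    have h2 : ∑ i ∈ Finset.range ((n-1)+1), a (i : ℕ) * x ^ q ^ i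
        = (∑ i ∈ Finset.range (n-1), a (i : ℕ) * x ^ q ^ i)
          + a ((n-1 : ℕ) : ZMod n) * x ^ q ^ (n-1) :=
      Finset.sum_range_succ _ _
    rw [h1, ← h4, h2, h3, htop]
    ring
  have hkerset : ((LinearMap.ker φ : Submodule k L) : Set L)
      = {x : L | ∑ i ∈ Finset.range (n - 1), a (i : ℕ) * x ^ q ^ i = 0} := by
    ext x
    simp only [SetLike.mem_coe, LinearMap.mem_ker, Set.mem_setOf_eq, hφ, hFrange]
  -- dimension counts
  haveI : Fintype (LinearMap.ker φ) := Fintype.ofFinite _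
  haveI : Fintype (LinearMap.range φ) := Fintype.ofFinite _
  have hkercard : Fintype.card (LinearMap.ker φ) = q ^ (n - 2) := by
    rw [← Nat.card_eq_fintype_card]
    have : Nat.card (LinearMap.ker φ) = Set.ncard ((LinearMap.ker φ : Submodule k L) : Set L) :=
      Nat.card_coe_set_eq _
    rw [this, hkerset, hker]
  have hkerrank : Module.finrank k (LinearMap.ker φ) = n - 2 := by
    have h1 : Fintype.card (LinearMap.ker φ)
        = Fintype.card k ^ Module.finrank k (LinearMap.ker φ) := Module.card_eq_pow_finrank
    rw [hkercard, hkcard] at h1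
    exact Nat.pow_right_injective hq2 h1.symm
  have hrangerank : Module.finrank k (LinearMap.range φ) = 2 := by
    have h1 := LinearMap.finrank_range_add_finrank_ker φ
    rw [hrankL, hkerrank] at h1
    omega
  -- bases
  let bb : Module.Basis (ZMod n) k L := (Module.finBasisOfFinrankEq k L hrankL).reindex
      (Fintype.equivOfCardEq (by simp [ZMod.card]))
  let BB : Module.Basis (Fin 2) k (LinearMap.range φ) := Module.finBasisOfFinrankEq k _ hrangerank
  set v : L := (BB 0 : L) with hv
  set w : L := (BB 1 : L) with hw
  have hvw : ∀ x : L, ∃ lam mu : k, F x = (lam : L) * v + (mu : L) * w := by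
    intro x
    have hx : F x ∈ LinearMap.range φ := ⟨x, rfl⟩
    refine ⟨BB.repr ⟨F x, hx⟩ 0, BB.repr ⟨F x, hx⟩ 1, ?_⟩
    have h1 := BB.sum_repr ⟨F x, hx⟩
    rw [Fin.sum_univ_two] at h1
    have h2 := congrArg (Subtype.val) h1
    rw [Submodule.coe_add, Submodule.coe_smul, Submodule.coe_smul] at h2
    rw [hsmulk, hsmulk] at h2
    exact h2.symm
  have hw0 : w ≠ 0 := by
    intro h
    exact BB.ne_zero 1 (by rw [← Submodule.coe_eq_zero]; exact h)
  have hvnotmul : ∀ r : k, v ≠ (r : L) * w := by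
    intro r hvr
    have h1 : BB 0 = r • BB 1 := by
      apply Subtype.ext
      rw [Submodule.coe_smul, hsmulk]
      exact hvr
    have h2 := congrArg (fun z => (BB.repr z) 0) h1
    simp only [Module.Basis.repr_self, map_smul, Finsupp.smul_apply] at h2
    rw [Finsupp.single_apply, Finsupp.single_apply] at h2
    simp at h2
  -- the shift s
  set s : ℕ := n - t + 1 with hsdef
  have hs1 : 1 ≤ s := by omega
  have hs2 : s < n := by omega
  have hcop : Nat.Coprime s n := by
    have hd1 : Nat.gcd s n ∣ t - 1 := by
      have h1 : Nat.gcd s n ∣ s := Nat.gcd_dvd_left s n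
      have h2 : Nat.gcd s n ∣ n := Nat.gcd_dvd_right s n
      have h3 : t - 1 = n - s := by omega
      rw [h3]
      exact Nat.dvd_sub h2 h1
    have hd2 : Nat.gcd s n ∣ Nat.gcd (t-1) n := Nat.dvd_gcd hd1 (Nat.gcd_dvd_right s n)
    rw [hgcd] at hd2
    exact Nat.eq_one_of_dvd_one hd2
  -- fixed points of the s-th Frobenius power are in k
  have hfixs : ∀ x : L, x ^ q ^ s = x → x ^ q = x := by
    intro x hx
    have hiter : ∀ d : ℕ, x ^ q ^ (s * d) = x := by
      intro d
      induction d with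
      | zero => simp
      | succ d ih =>
          have : s * (d+1) = s * d + s := by ring
          rw [this, pow_add, pow_mul, ih, hx]
    obtain ⟨m', -, hm'⟩ := Nat.exists_mul_mod_eq_one_of_coprime hcop (by omega : 1 < n)
    have h1 := hiter m'
    rw [powq x (s * m'), hm'] at h1
    rwa [pow_one] at h1
  -- the 2x2 Moore determinant is nonzero
  have hdelta : v * w ^ q ^ s - w * v ^ q ^ s ≠ 0 := by
    intro hd
    have hws : w ^ q ^ s ≠ 0 := pow_ne_zero _ hw0
    set ρ : L := v * w⁻¹ with hρdef
    have hρ : ρ ^ q ^ s = ρ := by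
      rw [hρdef, mul_pow, inv_pow]
      rw [sub_eq_zero] at hd
      field_simp
      linear_combination -hd
    have hρq : ρ ^ q = ρ := hfixs ρ hρ
    refine hvnotmul ⟨ρ, hρq⟩ ?_
    show v = ρ * w
    rw [hρdef]
    field_simp
  -- coefficients of basis images
  choose lam mu hlm using fun j => hvw (bb j)
  have hFpow : ∀ (j : ZMod n) (c : ℕ),
      F (bb j) ^ q ^ c = (lam j : L) * v ^ q ^ c + (mu j : L) * w ^ q ^ c := by
    intro j c
    rw [hlm j, frob_add, mul_pow, mul_pow, hfix ((lam j) : L) (lam j).2 c,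
      hfix ((mu j) : L) (mu j).2 c]
  -- rows of the value matrix lie in the span of rows 0 and s
  have hNspan : ∀ i : ZMod n, ∃ α β : L, ∀ j : ZMod n,
      F (bb j) ^ q ^ i.val = α * F (bb j) + β * F (bb j) ^ q ^ s := by
    intro i
    set δ : L := v * w ^ q ^ s - w * v ^ q ^ s with hδdef
    refine ⟨(v ^ q ^ i.val * w ^ q ^ s - w ^ q ^ i.val * v ^ q ^ s) / δ,
            (w ^ q ^ i.val * v - v ^ q ^ i.val * w) / δ, ?_⟩
    intro j
    rw [hFpow j i.val, hFpow j s, hlm j]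
    field_simp
    ring
  -- injectivity of the Moore evaluation
  have Tinj : ∀ c : ZMod n → L,
      (∀ j : ZMod n, ∑ m : ZMod n, c m * bb j ^ q ^ m.val = 0) → c = 0 := by
    intro c hc
    have hψadd : ∀ x y : L, (∑ m : ZMod n, c m * (x + y) ^ q ^ m.val)
        = (∑ m : ZMod n, c m * x ^ q ^ m.val) + (∑ m : ZMod n, c m * y ^ q ^ m.val) := by
      intro x y
      rw [← Finset.sum_add_distrib]
      refine Finset.sum_congr rfl fun m _ => ?_
      rw [frob_add, mul_add]
    have hψsmul : ∀ (r : k) (x : L), (∑ m : ZMod n, c m * ((r : L) * x) ^ q ^ m.val)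
        = (r : L) * ∑ m : ZMod n, c m * x ^ q ^ m.val := by
      intro r x
      rw [Finset.mul_sum]
      refine Finset.sum_congr rfl fun m _ => ?_
      rw [mul_pow, hfix (r : L) r.2 m.val]
      ring
    let ψ : L →ₗ[k] L :=
      { toFun := fun x => ∑ m : ZMod n, c m * x ^ q ^ m.val
        map_add' := hψadd
        map_smul' := fun r x => hψsmul r x }
    have hψ0 : ψ = (0 : L →ₗ[k] L) := by
      apply Module.Basis.ext bb
      intro j
      show (∑ m : ZMod n, c m * bb j ^ q ^ m.val) = 0
      exact hc j
    apply qpoly_zero hq2 hL c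
    intro x
    have := LinearMap.congr_fun hψ0 x
    exact this
  -- the Moore evaluation of the Dickson rows
  have hTu : ∀ (i : ZMod n) (j : ZMod n),
      ∑ m : ZMod n, a (m - i) ^ q ^ i.val * bb j ^ q ^ m.val = F (bb j) ^ q ^ i.val := by
    intro i j
    rw [hF]
    simp only []
    rw [frob_sum i.val (fun m => a m * (bb j : L) ^ q ^ m.val)]
    refine Fintype.sum_equiv (Equiv.subRight i) _ _ ?_
    intro m
    show a (m - i) ^ q ^ i.val * bb j ^ q ^ m.val
        = (a (m - i) * bb j ^ q ^ (m - i).val) ^ q ^ i.val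
    rw [mul_pow]
    congr 1
    rw [← pow_mul, ← pow_add, powq (bb j) ((m - i).val + i.val)]
    have h1 : ((m - i).val + i.val) % n = m.val := by
      rw [← ZMod.val_add, sub_add_cancel]
    rw [h1]
  -- the span property transfers to the coefficient rows
  set s' : ZMod n := ((s : ℕ) : ZMod n) with hs'def
  have hs'val : s'.val = s := by rw [hs'def, ZMod.val_natCast, Nat.mod_eq_of_lt hs2]
  have SPAN : ∀ i : ZMod n, ∃ α β : L, ∀ j : ZMod n,
      a (j - i) ^ q ^ i.val = α * a j + β * a (j - s') ^ q ^ s := by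
    intro i
    obtain ⟨α, β, hN⟩ := hNspan i
    refine ⟨α, β, ?_⟩
    have hzero : (fun j : ZMod n =>
        a (j - i) ^ q ^ i.val - α * a j - β * a (j - s') ^ q ^ s) = 0 := by
      apply Tinj
      intro j
      have e1 : ∑ m : ZMod n,
          (a (m - i) ^ q ^ i.val - α * a m - β * a (m - s') ^ q ^ s) * bb j ^ q ^ m.val
          = (∑ m : ZMod n, a (m - i) ^ q ^ i.val * bb j ^ q ^ m.val)
            - α * (∑ m : ZMod n, a m * bb j ^ q ^ m.val)
            - β * (∑ m : ZMod n, a (m - s') ^ q ^ s * bb j ^ q ^ m.val) := by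
        rw [Finset.mul_sum, Finset.mul_sum, ← Finset.sum_sub_distrib, ← Finset.sum_sub_distrib]
        refine Finset.sum_congr rfl fun m _ => ?_
        ring
      have hTu0 : ∑ m : ZMod n, a m * bb j ^ q ^ m.val = F (bb j) := by
        have h0 := hTu 0 j
        simpa using h0
      have hTus : ∑ m : ZMod n, a (m - s') ^ q ^ s * bb j ^ q ^ m.val = F (bb j) ^ q ^ s := by
        have h0 := hTu s' j
        rwa [hs'val] at h0
      rw [e1, hTu i j, hTu0, hTus, hN j]
      ring
    intro j
    have hz := congrFun hzero j
    simp only [Pi.zero_apply] at hz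
    linear_combination hz
  -- basic index facts
  have hnz : (n : ZMod n) = 0 := ZMod.natCast_self n
  have hm2 : a (-2 : ZMod n) = -1 := by rwa [hnz, zero_sub] at hlead
  have hm1 : a (-1 : ZMod n) = 0 := by rwa [hnz, zero_sub] at htop
  have hs'eq : s' = 1 - (t : ZMod n) := by
    rw [hs'def, hsdef]
    push_cast [Nat.cast_sub htn]
    rw [hnz]
    ring
  have hqs0 : q ^ s ≠ 0 := by positivity
  -- nonvanishing of a_{t-2}
  have hA : a ((t : ZMod n) - 2) ≠ 0 := by
    intro h0
    obtain ⟨α, β, hS⟩ := SPAN 1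
    have h1 := hS (-1)
    have hidx : (-1 : ZMod n) - s' = (t : ZMod n) - 2 := by rw [hs'eq]; ring
    have hidx2 : (-1 : ZMod n) - 1 = -2 := by ring
    rw [hidx2, hm2, hidx, h0, hm1] at h1
    have h2 : ((-1 : L)) ^ q ^ (1 : ZMod n).val ≠ 0 := pow_ne_zero _ (by norm_num)
    apply h2
    rw [h1, zero_pow hqs0]
    ring
  -- nonvanishing of a_{n-t}
  have hB : a (-(t : ZMod n)) ≠ 0 := by
    intro h0
    obtain ⟨α, β, hS⟩ := SPAN (s' + 1)
    have h1 := hS (s' - 1)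
    have hidxA : s' - 1 - (s' + 1) = (-2 : ZMod n) := by ring
    have hidxB : s' - 1 - s' = (-1 : ZMod n) := by ring
    have hidxC : s' - 1 = -(t : ZMod n) := by rw [hs'eq]; ring
    rw [hidxA, hm2, hidxB, hm1, hidxC, h0] at h1
    have h2 : ((-1 : L)) ^ q ^ (s' + 1 : ZMod n).val ≠ 0 := pow_ne_zero _ (by norm_num)
    apply h2
    rw [h1, zero_pow hqs0]
    ring
  refine ⟨hA, by rw [hnz, zero_sub]; exact hB, ?_⟩
  -- the relation
  set i2 : ZMod n := ((2 * s : ℕ) : ZMod n) with hi2def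
  have hi2val : i2.val = (2 * s) % n := by rw [hi2def, ZMod.val_natCast]
  have hi2eq : i2 = 2 - 2 * (t : ZMod n) := by
    rw [hi2def, hsdef]
    push_cast [Nat.cast_sub htn]
    rw [hnz]
    ring
  obtain ⟨α, β, hS⟩ := SPAN i2
  have E1 := hS (s' - 1)
  have E2 := hS (2 * s' - 1)
  have E3 := hS (-1)
  have hE1l : s' - 1 - i2 = (t : ZMod n) - 2 := by rw [hi2eq, hs'eq]; ring
  have hE1m : s' - 1 = -(t : ZMod n) := by rw [hs'eq]; ring
  have hE1r : s' - 1 - s' = (-1 : ZMod n) := by ring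
  rw [hE1l, hE1r, hE1m, hm1, zero_pow hqs0, mul_zero, add_zero] at E1
  have hE2l : 2 * s' - 1 - i2 = (-1 : ZMod n) := by rw [hi2eq, hs'eq]; ring
  have hE2m : 2 * s' - 1 = 1 - 2 * (t : ZMod n) := by rw [hs'eq]; ring
  have hE2r : 2 * s' - 1 - s' = -(t : ZMod n) := by rw [hs'eq]; ring
  rw [hE2l, hm1, zero_pow (by positivity : q ^ i2.val ≠ 0), hE2r, hE2m] at E2
  have hE3l : (-1 : ZMod n) - i2 = 2 * (t : ZMod n) - 3 := by rw [hi2eq]; ring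
  have hE3r : (-1 : ZMod n) - s' = (t : ZMod n) - 2 := by rw [hs'eq]; ring
  rw [hE3l, hE3r, hm1, mul_zero, zero_add] at E3
  -- rewrite the goal
  rw [hnz, zero_sub, zero_sub]
  have hg1 : -(2 * (t : ZMod n)) + 1 = 1 - 2 * (t : ZMod n) := by ring
  rw [hg1]
  have hp1 : ∀ z : L, z ^ (q ^ (2 * s) + q ^ s) = z ^ q ^ i2.val * z ^ q ^ s := by
    intro z
    rw [pow_add]
    congr 1
    rw [powq z (2 * s), hi2val]
  have hp2 : ∀ z : L, z ^ (q ^ s + 1) = z ^ q ^ s * z := by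
    intro z
    rw [pow_add, pow_one]
  have hp3 : ∀ z : L, z ^ q ^ (2 * s) = z ^ q ^ i2.val := by
    intro z
    rw [powq z (2 * s), hi2val]
  rw [hp1, hp2, hp3]
  linear_combination (a (1 - 2*(t : ZMod n)) * a ((t : ZMod n) - 2) ^ q ^ s) * E1
    - (a (-(t : ZMod n)) * a ((t : ZMod n) - 2) ^ q ^ s) * E2
    + (a (-(t : ZMod n)) ^ q ^ s * a (-(t : ZMod n))) * E3
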